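/- (Refined gradient descent inequality) Let f : ℝ^n → ℝ be convex with L-Lipschitz gradient, and 0 < t ≤ 1/L. For any x set x⁺ := x − t∇f(x). Then f(x) ≥ f(x⁺) + (t/2)‖∇f(x)‖² + (t/2)‖∇f(x⁺)‖². -/

import Mathlib

open scoped RealInnerProductSpace
open InnerProductSpace

section Aux

variable {E : Type*} [NormedAddCommGroup E] [InnerProductSpace ℝ E] [FiniteDimensional ℝ E]

lemma curve_hasDerivAt (f : E → ℝ) (f' : E → E) (hdiff : ∀ x, HasGradientAt f (f' x) x)
    (x v : E) (s₀ : ℝ) :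
    HasDerivAt (fun s : ℝ => f (x + s • v)) ⟪f' (x + s₀ • v), v⟫ s₀ := by
  have hc : HasDerivAt (fun s : ℝ => x + s • v) v s₀ := by
    simpa using ((hasDerivAt_id s₀).smul_const v).const_add x
  have := ((hdiff (x + s₀ • v)).hasFDerivAt).comp_hasDerivAt s₀ hc
  simpa [InnerProductSpace.toDual_apply_apply, Function.comp_def] using this

lemma convex_first_order (f : E → ℝ) (f' : E → E) (hdiff : ∀ x, HasGradientAt f (f' x) x)
    (hconv : ConvexOn ℝ Set.univ f) (x y : E) :
    f x + ⟪f' x, y - x⟫ ≤ f y := by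
  set g : ℝ → ℝ := fun s => f (x + s • (y - x)) with hg
  have hd : HasDerivAt g ⟪f' x, y - x⟫ 0 := by
    have := curve_hasDerivAt f f' hdiff x (y - x) 0
    simpa [hg] using this
  have hslope : ∀ s ∈ Set.Ioo (0:ℝ) 1, slope g 0 s ≤ f y - f x := by
    intro s hs
    have hxs : x + s • (y - x) = (1 - s) • x + s • y := by
      rw [smul_sub, sub_smul, one_smul]; abel
    have hcv := hconv.2 (Set.mem_univ x) (Set.mem_univ y)
      (by linarith [hs.2] : (0:ℝ) ≤ 1 - s) hs.1.le (by ring)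
    rw [slope_def_field]
    have hg0 : g 0 = f x := by simp [hg]
    have hgs : g s ≤ (1 - s) * f x + s * f y := by
      rw [hg]; simp only [hxs]; simpa [smul_eq_mul] using hcv
    rw [sub_zero, hg0, div_le_iff₀ hs.1]
    nlinarith [hs.1]
  have htend : Filter.Tendsto (slope g 0) (nhdsWithin 0 (Set.Ioi 0)) (nhds ⟪f' x, y - x⟫) :=
    (hasDerivAt_iff_tendsto_slope.mp hd).mono_left
      (nhdsWithin_mono 0 (fun s hs => ne_of_gt hs))
  have hle : ⟪f' x, y - x⟫ ≤ f y - f x := by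
    refine le_of_tendsto htend ?_
    filter_upwards [Ioo_mem_nhdsGT zero_lt_one] with s hs
    exact hslope s hs
  linarith

lemma descent_lemma (f : E → ℝ) (f' : E → E) (L : ℝ) (hL : 0 < L)
    (hdiff : ∀ x, HasGradientAt f (f' x) x)
    (hlip : ∀ x y, ‖f' x - f' y‖ ≤ L * ‖x - y‖) (x y : E) :
    f y ≤ f x + ⟪f' x, y - x⟫ + L / 2 * ‖y - x‖ ^ 2 := by
  have hcontf' : Continuous f' := by
    refine (LipschitzWith.of_dist_le_mul (K := L.toNNReal) fun a b => ?_).continuous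
    rw [dist_eq_norm, dist_eq_norm]
    calc ‖f' a - f' b‖ ≤ L * ‖a - b‖ := hlip a b
      _ ≤ L.toNNReal * ‖a - b‖ := by
          gcongr; exact (Real.le_coe_toNNReal L)
  set v := y - x with hv
  set g' : ℝ → ℝ := fun s => ⟪f' (x + s • v), v⟫ with hg'
  have hcont : Continuous g' := by
    apply Continuous.inner
    · exact hcontf'.comp (by continuity)
    · exact continuous_const
  have hderiv : ∀ s ∈ Set.uIcc (0:ℝ) 1, HasDerivAt (fun s : ℝ => f (x + s • v)) (g' s) s :=
    fun s _ => curve_hasDerivAt f f' hdiff x v s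
  have hftc : (∫ s in (0:ℝ)..1, g' s) = f (x + (1:ℝ) • v) - f (x + (0:ℝ) • v) :=
    intervalIntegral.integral_eq_sub_of_hasDerivAt hderiv (hcont.intervalIntegrable 0 1)
  have hbound : ∀ s ∈ Set.Icc (0:ℝ) 1, g' s ≤ ⟪f' x, v⟫ + (L * ‖v‖ ^ 2) * s := by
    intro s hs
    have h1 : g' s - ⟪f' x, v⟫ = ⟪f' (x + s • v) - f' x, v⟫ := by
      rw [inner_sub_left]
    have h2 : ⟪f' (x + s • v) - f' x, v⟫ ≤ ‖f' (x + s • v) - f' x‖ * ‖v‖ :=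
      real_inner_le_norm _ _
    have h3 : ‖f' (x + s • v) - f' x‖ ≤ L * (s * ‖v‖) := by
      have := hlip (x + s • v) x
      simpa [norm_smul, abs_of_nonneg hs.1] using this
    nlinarith [norm_nonneg v, mul_le_mul_of_nonneg_right h3 (norm_nonneg v)]
  have hintle : (∫ s in (0:ℝ)..1, g' s) ≤ ∫ s in (0:ℝ)..1, (⟪f' x, v⟫ + (L * ‖v‖ ^ 2) * s) := by
    apply intervalIntegral.integral_mono_on zero_le_one (hcont.intervalIntegrable 0 1)
    · exact (Continuous.intervalIntegrable (by continuity) _ _)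
    · exact hbound
  have hval : (∫ s in (0:ℝ)..1, (⟪f' x, v⟫ + (L * ‖v‖ ^ 2) * s)) =
      ⟪f' x, v⟫ + L / 2 * ‖v‖ ^ 2 := by
    have h1 : IntervalIntegrable (fun s : ℝ => (L * ‖v‖ ^ 2) * s) MeasureTheory.volume 0 1 :=
      (continuous_const.mul continuous_id).intervalIntegrable 0 1
    rw [intervalIntegral.integral_add (intervalIntegrable_const) h1,
      intervalIntegral.integral_const,
      intervalIntegral.integral_const_mul]
    rw [integral_id]
    norm_num
    ring
  have hx0 : x + (0:ℝ) • v = x := by simp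
  have hx1 : x + (1:ℝ) • v = y := by simp [hv]
  rw [hx0, hx1] at hftc
  rw [hval] at hintle
  linarith [hftc ▸ hintle]

lemma cocoercive_lower (f : E → ℝ) (f' : E → E) (L : ℝ) (hL : 0 < L)
    (hdiff : ∀ x, HasGradientAt f (f' x) x)
    (hconv : ConvexOn ℝ Set.univ f)
    (hlip : ∀ x y, ‖f' x - f' y‖ ≤ L * ‖x - y‖) (x y : E) :
    f x + ⟪f' x, y - x⟫ + 1 / (2 * L) * ‖f' y - f' x‖ ^ 2 ≤ f y := by
  set φ : E → ℝ := fun z => f z - ⟪f' x, z⟫ with hφ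
  set φ' : E → E := fun z => f' z - f' x with hφ'
  have hφdiff : ∀ z, HasGradientAt φ (φ' z) z := by
    intro z
    have hlin : HasFDerivAt (fun w : E => ⟪f' x, w⟫)
        (InnerProductSpace.toDual ℝ E (f' x)) z := by
      exact (InnerProductSpace.toDual ℝ E (f' x)).hasFDerivAt
    have := (hdiff z).hasFDerivAt.sub hlin
    rw [HasGradientAt, HasGradientAtFilter, map_sub]
    exact this
  have hφconv : ConvexOn ℝ Set.univ φ := by
    refine hconv.sub ⟨convex_univ, ?_⟩
    intro a _ b _ p q hp hq hpq
    apply le_of_eq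
    simp [inner_add_right, real_inner_smul_right]
  have hφlip : ∀ z w, ‖φ' z - φ' w‖ ≤ L * ‖z - w‖ := by
    intro z w
    simpa [hφ', sub_sub_sub_cancel_right] using hlip z w
  have h1 : φ x ≤ φ (y - (1 / L) • φ' y) := by
    have := convex_first_order φ φ' hφdiff hφconv x (y - (1 / L) • φ' y)
    simpa [hφ'] using this
  have h2 : φ (y - (1 / L) • φ' y) ≤ φ y - 1 / (2 * L) * ‖φ' y‖ ^ 2 := by
    have hd := descent_lemma φ φ' L hL hφdiff hφlip y (y - (1 / L) • φ' y)
    have he : y - (1 / L) • φ' y - y = -((1 / L) • φ' y) := by abel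
    rw [he] at hd
    have hi : ⟪φ' y, -((1 / L) • φ' y)⟫ = -(1 / L) * ‖φ' y‖ ^ 2 := by
      rw [inner_neg_right, real_inner_smul_right, real_inner_self_eq_norm_sq]
      ring
    have hn : ‖-((1 / L) • φ' y)‖ ^ 2 = (1 / L) ^ 2 * ‖φ' y‖ ^ 2 := by
      rw [norm_neg, norm_smul, Real.norm_eq_abs, abs_of_pos (one_div_pos.mpr hL)]
      ring
    rw [hi, hn] at hd
    have h3 : L / 2 * ((1 / L) ^ 2 * ‖φ' y‖ ^ 2) = 1 / (2 * L) * ‖φ' y‖ ^ 2 := by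
      field_simp
    have h4 : (1 / L) * ‖φ' y‖ ^ 2 = 2 * (1 / (2 * L) * ‖φ' y‖ ^ 2) := by
      field_simp
    linarith [hd, h3, h4]
  have hxy : φ x ≤ φ y - 1 / (2 * L) * ‖φ' y‖ ^ 2 := le_trans h1 h2
  have : f x - ⟪f' x, x⟫ ≤ f y - ⟪f' x, y⟫ - 1 / (2 * L) * ‖f' y - f' x‖ ^ 2 := hxy
  have hir : ⟪f' x, y - x⟫ = ⟪f' x, y⟫ - ⟪f' x, x⟫ := inner_sub_right _ _ _
  linarith

end Aux

/-- **Refined gradient descent inequality.** For `f` convex with `L`-Lipschitz gradient,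
`0 < t ≤ 1/L` and `x⁺ = x - t∇f x`: `f(x) ≥ f(x⁺) + (t/2)‖∇f x‖² + (t/2)‖∇f x⁺‖²`. -/
theorem refined_gradient_descent
    {E : Type*} [NormedAddCommGroup E] [InnerProductSpace ℝ E] [FiniteDimensional ℝ E]
    (f : E → ℝ) (f' : E → E) (L : ℝ) (hL : 0 < L)
    (hdiff : ∀ x, HasGradientAt f (f' x) x)
    (hconv : ConvexOn ℝ Set.univ f)
    (hlip : ∀ x y, ‖f' x - f' y‖ ≤ L * ‖x - y‖)
    (t : ℝ) (ht : 0 < t) (htL : t ≤ 1 / L) (x : E) :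
    f x ≥ f (x - t • f' x) + (t / 2) * ‖f' x‖ ^ 2 + (t / 2) * ‖f' (x - t • f' x)‖ ^ 2 := by
  set p : E := x - t • f' x with hp
  have key := cocoercive_lower f f' L hL hdiff hconv hlip p x
  have hxp : x - p = t • f' x := by rw [hp]; abel
  rw [hxp] at key
  have hi : ⟪f' p, t • f' x⟫ = t * ⟪f' p, f' x⟫ := real_inner_smul_right _ _ _
  have hns : ‖f' x - f' p‖ ^ 2 = ‖f' x‖ ^ 2 - 2 * ⟪f' x, f' p⟫ + ‖f' p‖ ^ 2 := by
    rw [norm_sub_sq_real]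
  have hcomm : ⟪f' p, f' x⟫ = ⟪f' x, f' p⟫ := real_inner_comm _ _
  rw [hi, hns, hcomm] at key
  set a := ⟪f' x, f' p⟫
  set A := ‖f' x‖ ^ 2
  set B := ‖f' p‖ ^ 2
  have h2a : 0 ≤ A - 2 * a + B := by
    linarith [sq_nonneg ‖f' x - f' p‖, hns]
  have hs2 : 1 / (2 * L) * (A - 2 * a + B) = (1 / L) / 2 * (A - 2 * a + B) := by ring
  rw [hs2] at key
  set u := 1 / L with hu
  have hut : t ≤ u := htL
  nlinarith [mul_nonneg (sub_nonneg.mpr hut) h2a, key]
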